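/- Let n ≥ 1. The third moment of the real equatorial stabilizer ensemble satisfies (1/|ℬₙ|) Σ_{A ∈ ℬₙ} (φ^{req}_A (φ^{req}_A)†)^{⊗3} = (1/8ⁿ) Σ_{(x,y,z,w,s,t) ∈ 𝒦₁} |x y z⟩⟨w s t|, where 𝒦₁ is the set of 6-tuples (x,y,z,w,s,t) of bit strings in {0,1}ⁿ for which there exists a partition of {1,…,6} into three pairs {(i₁,j₁),(i₂,j₂),(i₃,j₃)} with v_{i_k} = v_{j_k} for k = 1,2,3, writing (v₁,…,v₆) = (x,y,z,w,s,t). -/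

import Mathlib

open Finset Matrix

/-- Bit strings of length `n`, with entries viewed as `0/1` integers via `Fin 2`. -/
abbrev Bits (n : ℕ) := Fin n → Fin 2

/-- The index set `ℬₙ`: upper-triangular `n × n` matrices with entries in `{0,1}`
(`a_{ij} = 0` for `i > j`). -/
def Bn (n : ℕ) : Finset (Matrix (Fin n) (Fin n) (Fin 2)) :=
  @Finset.filter _ (fun A => ∀ i j : Fin n, j < i → A i j = 0)
    (fun _ => @Fintype.decidableForallFintype _ _
      (fun _ => Fintype.decidableForallFintype) _) Finset.univ

/-- The quadratic form `xᵀ A x` (its parity is what matters). -/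
def quadB {n : ℕ} (A : Matrix (Fin n) (Fin n) (Fin 2)) (x : Bits n) : ℕ :=
  ∑ i, ∑ j, (A i j : ℕ) * (x i : ℕ) * (x j : ℕ)

/-- The real equatorial stabilizer state `φ^{req}_A`. -/
noncomputable def phiReq {n : ℕ} (A : Matrix (Fin n) (Fin n) (Fin 2)) (x : Bits n) : ℂ :=
  (-1 : ℂ) ^ quadB A x / (Real.sqrt (2 ^ n) : ℂ)

/-- The rank-one projector `φ φ†` onto a vector `φ`. -/
noncomputable def outer {ι : Type*} (φ : ι → ℂ) : Matrix ι ι ℂ :=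
  Matrix.of fun x y => φ x * (starRingEnd ℂ) (φ y)

/-- The Kronecker (tensor) cube of a matrix, indexed by triples. -/
def kron3 {ι : Type*} (M : Matrix ι ι ℂ) : Matrix (ι × ι × ι) (ι × ι × ι) ℂ :=
  Matrix.of fun p q => M p.1 q.1 * M p.2.1 q.2.1 * M p.2.2 q.2.2

/-- A 6-tuple `v` is "paired" if `{1,…,6}` partitions into three pairs on which `v`
agrees; equivalently there is a fixed-point-free involution `σ` of `Fin 6` with `v ∘ σ = v`. -/
def Paired {α : Type*} (v : Fin 6 → α) : Prop :=
  ∃ σ : Equiv.Perm (Fin 6), (∀ k, σ k ≠ k) ∧ (∀ k, σ (σ k) = k) ∧ (∀ k, v (σ k) = v k)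

instance {α : Type*} [DecidableEq α] (v : Fin 6 → α) : Decidable (Paired v) := by
  unfold Paired; infer_instance

section Aux

def zc (a : Fin 2) : ZMod 2 := (a.val : ZMod 2)

def zv {n : ℕ} (u : Bits n) : Fin n → ZMod 2 := fun i => zc (u i)

def Cz {n : ℕ} (v : Fin 6 → Bits n) : Prop :=
  ∀ i j : Fin n, ∑ k : Fin 6, zv (v k) i * zv (v k) j = 0

lemma z2_add_self : ∀ a : ZMod 2, a + a = 0 := by decide

lemma z2_cases : ∀ a : ZMod 2, a = 0 ∨ a = 1 := by decide

end Aux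


def pidx (i : ℕ) : ℕ := if i % 2 = 0 then i + 1 else i - 1

lemma pidx_lt {i L : ℕ} (hL : Even L) (h : i < L) : pidx i < L := by
  obtain ⟨m, hm⟩ := hL; unfold pidx; split_ifs <;> omega

lemma pidx_pidx {i : ℕ} : pidx (pidx i) = i := by
  unfold pidx; split_ifs <;> omega

lemma pidx_ne {i : ℕ} : pidx i ≠ i := by
  unfold pidx; split_ifs <;> omega

lemma paired_of_even_fibers {α : Type*} [DecidableEq α] (v : Fin 6 → α)
    (h : ∀ k : Fin 6, Even (univ.filter (fun l => v l = v k)).card) :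
    Paired v := by
  classical
  set L : Fin 6 → List (Fin 6) := fun k => (univ.filter (fun l => v l = v k)).sort (· ≤ ·) with hL
  have hmem : ∀ k, k ∈ L k := fun k => by
    rw [hL]; rw [Finset.mem_sort]; simp
  have hnodup : ∀ k, (L k).Nodup := fun k => Finset.sort_nodup _ _
  have hlen : ∀ k, Even (L k).length := fun k => by
    rw [hL]; rw [Finset.length_sort]; exact h k
  have hidx : ∀ k, List.idxOf k (L k) < (L k).length :=
    fun k => List.idxOf_lt_length_iff.mpr (hmem k)
  set p : Fin 6 → Fin 6 := fun k =>
    (L k).get ⟨pidx (List.idxOf k (L k)), pidx_lt (hlen k) (hidx k)⟩ with hp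
  have hpmem : ∀ k, p k ∈ L k := fun k => by rw [hp]; exact List.get_mem _ _
  have hvp : ∀ k, v (p k) = v k := fun k => by
    have := hpmem k
    rw [hL, Finset.mem_sort, Finset.mem_filter] at this
    exact this.2
  have hLp : ∀ k, L (p k) = L k := fun k => by
    have h2 := hvp k; simp only [hL, h2]
  have hidxp : ∀ k, List.idxOf (p k) (L k) = pidx (List.idxOf k (L k)) := fun k =>
    List.get_idxOf (hnodup k) ⟨pidx (List.idxOf k (L k)), pidx_lt (hlen k) (hidx k)⟩
  have hne : ∀ k, p k ≠ k := by
    intro k hk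
    have := hidxp k
    rw [hk] at this
    exact pidx_ne this.symm
  have hpp : ∀ k, p (p k) = k := by
    intro k
    have h1 : List.idxOf (p (p k)) (L (p k)) = pidx (List.idxOf (p k) (L (p k))) := hidxp (p k)
    rw [hLp k] at h1
    rw [hidxp k, pidx_pidx] at h1
    have h2 : p (p k) ∈ L k := by rw [← hLp k]; exact hpmem (p k)
    exact (List.idxOf_inj h2).mp h1
  exact ⟨Function.Involutive.toPerm p hpp, hne, fun k => hpp k, fun k => hvp k⟩


lemma zc_inj : Function.Injective zc := by decide

lemma zv_inj {n : ℕ} : Function.Injective (zv (n := n)) := fun _ _ h =>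
  funext fun i => zc_inj (congrFun h i)

lemma zv_add_self {n : ℕ} (u : Bits n) : zv u + zv u = 0 :=
  funext fun _ => z2_add_self _

/-- Core separation: an affine functional vanishing where `zv u + zv a ∈ P`, equal to `1` at
`u0` with `zv u0 + zv a ∉ P`. -/
lemma sep_span {n : ℕ} (P : Submodule (ZMod 2) (Fin n → ZMod 2)) (a u0 : Bits n)
    (hq : zv u0 + zv a ∉ P) :
    ∃ (b : Fin n → ZMod 2) (e : ZMod 2),
      (∀ u : Bits n, zv u + zv a ∈ P → e + ∑ i, b i * zv u i = 0) ∧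
      e + ∑ i, b i * zv u0 i = 1 := by
  obtain ⟨f, hf0, hfbot⟩ := Submodule.exists_dual_map_eq_bot_of_notMem hq inferInstance
  have hsum : ∀ u : Bits n, (∑ i, (f fun j => if i = j then 1 else 0) * zv u i) = f (zv u) := by
    intro u
    rw [LinearMap.pi_apply_eq_sum_univ f (zv u)]
    exact Finset.sum_congr rfl fun i _ => by rw [smul_eq_mul, mul_comm]
  refine ⟨fun i => f fun j => if i = j then 1 else 0, f (zv a), ?_, ?_⟩
  · intro u hu
    rw [hsum u]
    have hz : f (zv u + zv a) = 0 := by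
      have : f (zv u + zv a) ∈ Submodule.map f P := ⟨_, hu, rfl⟩
      rwa [hfbot, Submodule.mem_bot] at this
    rw [map_add] at hz
    calc f (zv a) + f (zv u) = f (zv u) + f (zv a) := by ring
    _ = 0 := hz
  · rw [hsum u0]
    have h1 : f (zv u0 + zv a) = 1 := by
      rcases z2_cases (f (zv u0 + zv a)) with h | h
      · exact absurd h hf0
      · exact h
    rw [map_add] at h1
    calc f (zv a) + f (zv u0) = f (zv u0) + f (zv a) := by ring
    _ = 1 := h1

/-- Separation from a finset of ≤ 3 points. -/
lemma sep_affine {n : ℕ} (A : Finset (Bits n)) (u0 : Bits n)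
    (hA : A.Nonempty) (hcard : A.card ≤ 3) (h0 : u0 ∉ A)
    (hsum : A.card = 3 → ∑ u ∈ A, zv u ≠ zv u0) :
    ∃ (b : Fin n → ZMod 2) (e : ZMod 2),
      (∀ u ∈ A, e + ∑ i, b i * zv u i = 0) ∧
      e + ∑ i, b i * zv u0 i = 1 := by
  classical
  interval_cases h : A.card
  · obtain ⟨u, hu⟩ := hA; rw [Finset.card_eq_zero] at h; subst h; simp at hu
  · obtain ⟨c, rfl⟩ := Finset.card_eq_one.mp h
    have hne : u0 ≠ c := by rintro rfl; exact h0 (Finset.mem_singleton_self _)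
    have hq : zv u0 + zv c ∉ (⊥ : Submodule (ZMod 2) (Fin n → ZMod 2)) := by
      rw [Submodule.mem_bot]
      intro hz
      refine hne (zv_inj (add_right_cancel (b := zv c) ?_))
      rw [hz, zv_add_self]
    obtain ⟨b, e, h1, h2⟩ := sep_span ⊥ c u0 hq
    refine ⟨b, e, ?_, h2⟩
    intro u hu
    rw [Finset.mem_singleton] at hu; subst hu
    exact h1 u (by rw [zv_add_self]; exact Submodule.zero_mem _)
  · obtain ⟨a, c, hac, rfl⟩ := Finset.card_eq_two.mp h
    have hu0a : u0 ≠ a := fun hh => h0 (by rw [hh]; simp)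
    have hu0c : u0 ≠ c := fun hh => h0 (by rw [hh]; simp)
    have hq : zv u0 + zv a ∉ Submodule.span (ZMod 2) {zv c + zv a} := by
      rw [Submodule.mem_span_singleton]
      rintro ⟨t, ht⟩
      rcases z2_cases t with rfl | rfl
      · rw [zero_smul] at ht
        refine hu0a (zv_inj (add_right_cancel (b := zv a) ?_)).symm
        rw [← ht, zv_add_self]
      · rw [one_smul] at ht
        exact hu0c (zv_inj (add_right_cancel ht)).symm
    obtain ⟨b, e, h1, h2⟩ := sep_span _ a u0 hq
    refine ⟨b, e, ?_, h2⟩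
    intro u hu
    rcases Finset.mem_insert.mp hu with rfl | hu
    · exact h1 u (by rw [zv_add_self]; exact Submodule.zero_mem _)
    · rw [Finset.mem_singleton] at hu; subst hu
      exact h1 u (Submodule.subset_span rfl)
  · obtain ⟨a, b', c, hab, hac, hbc, rfl⟩ := Finset.card_eq_three.mp h
    have hu0a : u0 ≠ a := fun hh => h0 (by rw [hh]; simp)
    have hu0b : u0 ≠ b' := fun hh => h0 (by rw [hh]; simp)
    have hu0c : u0 ≠ c := fun hh => h0 (by rw [hh]; simp)
    have hssum : ∑ u ∈ ({a, b', c} : Finset (Bits n)), zv u = zv a + zv b' + zv c := by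
      rw [Finset.sum_insert (by simp [hab, hac]), Finset.sum_insert (by simp [hbc]),
        Finset.sum_singleton]
      ring
    have hq : zv u0 + zv a ∉ Submodule.span (ZMod 2) {zv b' + zv a, zv c + zv a} := by
      rw [Submodule.mem_span_pair]
      rintro ⟨s, t, hst⟩
      rcases z2_cases s with rfl | rfl <;> rcases z2_cases t with rfl | rfl <;>
        simp only [zero_smul, one_smul, add_zero, zero_add] at hst
      · refine hu0a (zv_inj (add_right_cancel (b := zv a) ?_)).symm
        rw [← hst, zv_add_self]
      · exact hu0c (zv_inj (add_right_cancel hst)).symm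
      · exact hu0b (zv_inj (add_right_cancel hst)).symm
      · -- hst : (zv b' + zv a) + (zv c + zv a) = zv u0 + zv a
        have h2 : zv b' + zv c = zv u0 + zv a := by
          have h3 : zv b' + zv c + (zv a + zv a) = zv u0 + zv a := by rw [← hst]; abel
          rwa [zv_add_self, add_zero] at h3
        have h4 : zv a + zv b' + zv c = zv u0 := by
          calc zv a + zv b' + zv c = zv a + (zv b' + zv c) := by abel
          _ = zv a + (zv u0 + zv a) := by rw [h2]
          _ = zv u0 + (zv a + zv a) := by abel
          _ = zv u0 := by rw [zv_add_self, add_zero]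
        exact hsum rfl (hssum.trans h4)
    obtain ⟨bb, e, h1, h2⟩ := sep_span _ a u0 hq
    refine ⟨bb, e, ?_, h2⟩
    intro u hu
    rcases Finset.mem_insert.mp hu with rfl | hu
    · exact h1 u (by rw [zv_add_self]; exact Submodule.zero_mem _)
    rcases Finset.mem_insert.mp hu with rfl | hu
    · exact h1 u (Submodule.subset_span (by simp))
    · rw [Finset.mem_singleton] at hu; subst hu
      exact h1 u (Submodule.subset_span (by simp))


lemma zv_mul_self {n : ℕ} (u : Bits n) (i : Fin n) : zv u i * zv u i = zv u i := by
  have : ∀ a : Fin 2, zc a * zc a = zc a := by decide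
  exact this _

lemma Cz_lin {n : ℕ} {v : Fin 6 → Bits n} (hC : Cz v) (i : Fin n) :
    ∑ k : Fin 6, zv (v k) i = 0 := by
  have h2 := hC i i
  rw [show (∑ k : Fin 6, zv (v k) i) = ∑ k : Fin 6, zv (v k) i * zv (v k) i from
    Finset.sum_congr rfl fun k _ => (zv_mul_self _ _).symm]
  exact h2

lemma six_smul : ∀ x : ZMod 2, (6 : ℕ) • x = 0 := by decide

lemma master {n : ℕ} {v : Fin 6 → Bits n} (hC : Cz v) (b d : Fin n → ZMod 2) (e1 e2 : ZMod 2) :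
    ∑ k : Fin 6, (e1 + ∑ i, b i * zv (v k) i) * (e2 + ∑ j, d j * zv (v k) j) = 0 := by
  have expand : ∀ k : Fin 6, (e1 + ∑ i, b i * zv (v k) i) * (e2 + ∑ j, d j * zv (v k) j)
      = e1 * e2 + (∑ j, (e1 * d j) * zv (v k) j) + (∑ i, (e2 * b i) * zv (v k) i)
        + ∑ i, ∑ j, (b i * d j) * (zv (v k) i * zv (v k) j) := by
    intro k
    have hA : e1 * (∑ j, d j * zv (v k) j) = ∑ j, (e1 * d j) * zv (v k) j := by
      rw [Finset.mul_sum]; exact Finset.sum_congr rfl fun j _ => by ring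
    have hB : (∑ i, b i * zv (v k) i) * e2 = ∑ i, (e2 * b i) * zv (v k) i := by
      rw [Finset.sum_mul]; exact Finset.sum_congr rfl fun i _ => by ring
    have hD : (∑ i, b i * zv (v k) i) * (∑ j, d j * zv (v k) j)
        = ∑ i, ∑ j, (b i * d j) * (zv (v k) i * zv (v k) j) := by
      rw [Finset.sum_mul_sum]
      exact Finset.sum_congr rfl fun i _ => Finset.sum_congr rfl fun j _ => by ring
    calc (e1 + ∑ i, b i * zv (v k) i) * (e2 + ∑ j, d j * zv (v k) j)
        = e1 * e2 + e1 * (∑ j, d j * zv (v k) j) + (∑ i, b i * zv (v k) i) * e2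
          + (∑ i, b i * zv (v k) i) * (∑ j, d j * zv (v k) j) := by ring
    _ = _ := by rw [hA, hB, hD]
  rw [Finset.sum_congr rfl fun k _ => expand k]
  rw [Finset.sum_add_distrib, Finset.sum_add_distrib, Finset.sum_add_distrib]
  have t1 : ∑ _k : Fin 6, e1 * e2 = 0 := by
    rw [Finset.sum_const, Finset.card_univ]; exact six_smul _
  have t2 : ∑ k : Fin 6, ∑ j, (e1 * d j) * zv (v k) j = 0 := by
    rw [Finset.sum_comm]
    apply Finset.sum_eq_zero; intro j _
    rw [← Finset.mul_sum, Cz_lin hC j, mul_zero]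
  have t3 : ∑ k : Fin 6, ∑ i, (e2 * b i) * zv (v k) i = 0 := by
    rw [Finset.sum_comm]
    apply Finset.sum_eq_zero; intro i _
    rw [← Finset.mul_sum, Cz_lin hC i, mul_zero]
  have t4 : ∑ k : Fin 6, ∑ i, ∑ j, (b i * d j) * (zv (v k) i * zv (v k) j) = 0 := by
    rw [Finset.sum_comm]
    apply Finset.sum_eq_zero; intro i _
    rw [Finset.sum_comm]
    apply Finset.sum_eq_zero; intro j _
    rw [← Finset.mul_sum, hC i j, mul_zero]
  rw [t1, t2, t3, t4]; ring


lemma even_smul_z2 {c : ℕ} (hc : Even c) (x : ZMod 2) : c • x = 0 := by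
  obtain ⟨m, rfl⟩ := hc
  rw [add_smul]
  calc m • x + m • x = m • (x + x) := by rw [smul_add]
  _ = 0 := by rw [z2_add_self, smul_zero]

lemma odd_smul_z2 {c : ℕ} (hc : ¬ Even c) (x : ZMod 2) : c • x = x := by
  obtain ⟨m, rfl⟩ := Nat.not_even_iff_odd.mp hc
  rw [add_smul, even_smul_z2 (even_two_mul m) x, zero_add, one_smul]

/-- The key combinatorial input: if the mod-2 moment condition holds, all fibers are even. -/
lemma even_fibers_of_Cz {n : ℕ} {v : Fin 6 → Bits n} (hC : Cz v) (k0 : Fin 6) :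
    Even (univ.filter (fun l => v l = v k0)).card := by
  classical
  by_contra hodd
  set u0 := v k0 with hu0
  set T : Finset (Bits n) := univ.image v with hT
  set S : Finset (Bits n) := T.filter (fun u => ¬ Even (univ.filter (fun l => v l = u)).card)
    with hS
  -- affine-pair sums over S vanish
  have hSsum : ∀ (b d : Fin n → ZMod 2) (e1 e2 : ZMod 2),
      ∑ u ∈ S, (e1 + ∑ i, b i * zv u i) * (e2 + ∑ j, d j * zv u j) = 0 := by
    intro b d e1 e2
    set g : Bits n → ZMod 2 := fun u => (e1 + ∑ i, b i * zv u i) * (e2 + ∑ j, d j * zv u j)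
      with hg
    have h1 : ∑ k : Fin 6, g (v k) = 0 := master hC b d e1 e2
    rw [Finset.sum_comp g v] at h1
    rw [← Finset.sum_filter_add_sum_filter_not T
      (fun u => ¬ Even (univ.filter (fun l => v l = u)).card)] at h1
    have h2 : ∑ u ∈ T.filter (fun u => ¬¬ Even (univ.filter (fun l => v l = u)).card),
        (univ.filter (fun l => v l = u)).card • g u = 0 := by
      apply Finset.sum_eq_zero
      intro u hu
      rw [Finset.mem_filter, not_not] at hu
      exact even_smul_z2 hu.2 _
    rw [h2, add_zero] at h1
    rw [← h1]
    apply Finset.sum_congr rfl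
    intro u hu
    rw [hS, Finset.mem_filter] at hu
    rw [odd_smul_z2 hu.2]
  have hu0S : u0 ∈ S := by
    rw [hS, Finset.mem_filter]
    exact ⟨Finset.mem_image_of_mem v (Finset.mem_univ k0), hodd⟩
  have hScard6 : S.card ≤ 6 := le_trans (Finset.card_filter_le _ _)
    (le_trans Finset.card_image_le (by simp))
  have hSeven : Even S.card := by
    have := hSsum 0 0 1 1
    simp only [Pi.zero_apply, zero_mul, Finset.sum_const_zero, add_zero, mul_one] at this
    rw [Finset.sum_const] at this
    by_contra h
    rw [odd_smul_z2 h] at this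
    exact one_ne_zero this
  -- now derive the contradiction
  set R : Finset (Bits n) := S.erase u0 with hR
  have hu0R : u0 ∉ R := Finset.notMem_erase _ _
  have hRcard : R.card = S.card - 1 := Finset.card_erase_of_mem hu0S
  -- find a good cover of R by two small sets
  have hcover : ∃ A1 A2 : Finset (Bits n), A1 ⊆ R ∧ A2 ⊆ R ∧ A1.Nonempty ∧ A2.Nonempty ∧
      A1.card ≤ 3 ∧ A2.card ≤ 3 ∧ (∀ u ∈ R, u ∈ A1 ∨ u ∈ A2) ∧
      (A1.card = 3 → ∑ u ∈ A1, zv u ≠ zv u0) ∧ (A2.card = 3 → ∑ u ∈ A2, zv u ≠ zv u0) := by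
    have h1 : 1 ≤ S.card := Finset.card_pos.mpr ⟨u0, hu0S⟩
    obtain ⟨m, hm⟩ := hSeven
    interval_cases hcS : S.card
    · omega
    · -- S.card = 2, R.card = 1
      have hR1 : R.card = 1 := by omega
      have hRne : R.Nonempty := Finset.card_pos.mp (by omega)
      refine ⟨R, R, le_refl _, le_refl _, hRne, hRne, by omega, by omega,
        fun u hu => Or.inl hu, by omega, by omega⟩
    · omega
    · -- S.card = 4, R.card = 3
      have hR3 : R.card = 3 := by omega
      have hRne : R.Nonempty := Finset.card_pos.mp (by omega)
      obtain ⟨a, ha⟩ := hRne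
      refine ⟨R.erase a, {a}, Finset.erase_subset _ _, by simpa using ha, ?_,
        ⟨a, Finset.mem_singleton_self a⟩, ?_, by simp, ?_, ?_, by simp⟩
      · rw [← Finset.card_pos, Finset.card_erase_of_mem ha, hR3]; omega
      · rw [Finset.card_erase_of_mem ha, hR3]; omega
      · intro u hu
        by_cases hua : u = a
        · exact Or.inr (by simp [hua])
        · exact Or.inl (Finset.mem_erase.mpr ⟨hua, hu⟩)
      · rw [Finset.card_erase_of_mem ha, hR3]; omega
    · omega
    · -- S.card = 6, R.card = 5
      have hR5 : R.card = 5 := by omega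
      obtain ⟨A0, hA0sub, hA0card⟩ := Finset.exists_subset_card_eq (show 3 ≤ R.card by omega)
      by_cases hA0 : ∑ u ∈ A0, zv u ≠ zv u0
      · refine ⟨A0, R \ A0, hA0sub, Finset.sdiff_subset, Finset.card_pos.mp (by omega), ?_,
          by omega, ?_, ?_, fun _ => hA0, ?_⟩
        · apply Finset.card_pos.mp
          rw [Finset.card_sdiff_of_subset hA0sub]; omega
        · rw [Finset.card_sdiff_of_subset hA0sub]; omega
        · intro u hu
          by_cases h : u ∈ A0
          · exact Or.inl h
          · exact Or.inr (Finset.mem_sdiff.mpr ⟨hu, h⟩)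
        · intro h3; rw [Finset.card_sdiff_of_subset hA0sub] at h3; omega
      · push_neg at hA0
        obtain ⟨x, hx⟩ : A0.Nonempty := Finset.card_pos.mp (by omega)
        obtain ⟨y, hy⟩ : (R \ A0).Nonempty := by
          apply Finset.card_pos.mp; rw [Finset.card_sdiff_of_subset hA0sub]; omega
        rw [Finset.mem_sdiff] at hy
        set A1 : Finset (Bits n) := insert y (A0.erase x) with hA1
        have hyx : y ∉ A0.erase x := fun hcon => hy.2 (Finset.mem_of_mem_erase hcon)
        have hA1card : A1.card = 3 := by
          rw [hA1, Finset.card_insert_of_notMem hyx, Finset.card_erase_of_mem hx, hA0card]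
        have hA1sub : A1 ⊆ R := by
          rw [hA1]
          intro u hu
          rcases Finset.mem_insert.mp hu with rfl | hu
          · exact hy.1
          · exact hA0sub (Finset.mem_of_mem_erase hu)
        have hA1sum : ∑ u ∈ A1, zv u ≠ zv u0 := by
          rw [hA1, Finset.sum_insert hyx]
          intro hcon
          have h6 : zv y + (∑ u ∈ A0.erase x, zv u + zv x) = zv y + ∑ u ∈ A0, zv u := by
            rw [Finset.sum_erase_add A0 _ hx]
          have h7 : zv y + zv u0 = zv u0 + zv x := by
            calc zv y + zv u0 = zv y + ∑ u ∈ A0, zv u := by rw [hA0]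
            _ = zv y + (∑ u ∈ A0.erase x, zv u + zv x) := by
                rw [Finset.sum_erase_add A0 _ hx]
            _ = (zv y + ∑ u ∈ A0.erase x, zv u) + zv x := by ring
            _ = zv u0 + zv x := by rw [hcon]
          have h8 : zv y = zv x := by
            have h9 : zv u0 + zv y = zv u0 + zv x := (add_comm (zv u0) (zv y)) ▸ h7
            exact add_left_cancel h9
          have : y = x := zv_inj h8
          exact hy.2 (this ▸ hx)
        refine ⟨A1, R \ A1, hA1sub, Finset.sdiff_subset, Finset.card_pos.mp (by omega), ?_,
          by omega, ?_, ?_, fun _ => hA1sum, ?_⟩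
        · apply Finset.card_pos.mp; rw [Finset.card_sdiff_of_subset hA1sub]; omega
        · rw [Finset.card_sdiff_of_subset hA1sub]; omega
        · intro u hu
          by_cases h : u ∈ A1
          · exact Or.inl h
          · exact Or.inr (Finset.mem_sdiff.mpr ⟨hu, h⟩)
        · intro h3; rw [Finset.card_sdiff_of_subset hA1sub] at h3; omega
  obtain ⟨A1, A2, hA1R, hA2R, hA1ne, hA2ne, hA1c, hA2c, hcov, hA1s, hA2s⟩ := hcover
  obtain ⟨b1, e1, hb1, hb1u0⟩ := sep_affine A1 u0 hA1ne hA1c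
    (fun hc => hu0R (hA1R hc)) hA1s
  obtain ⟨b2, e2, hb2, hb2u0⟩ := sep_affine A2 u0 hA2ne hA2c
    (fun hc => hu0R (hA2R hc)) hA2s
  have hfinal := hSsum b1 b2 e1 e2
  rw [Finset.sum_eq_single_of_mem u0 hu0S] at hfinal
  · rw [hb1u0, hb2u0, one_mul] at hfinal
    exact one_ne_zero hfinal
  · intro u huS hune
    have huR : u ∈ R := Finset.mem_erase.mpr ⟨hune, huS⟩
    rcases hcov u huR with h | h
    · rw [hb1 u h, zero_mul]
    · rw [hb2 u h, mul_zero]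


lemma natCast_z2_even {a : ℕ} (h : Even a) : (a : ZMod 2) = 0 := by
  obtain ⟨m, rfl⟩ := h
  push_cast
  rw [← two_mul, show (2 : ZMod 2) = 0 from by decide, zero_mul]

lemma natCast_z2_odd {a : ℕ} (h : Odd a) : (a : ZMod 2) = 1 := by
  obtain ⟨m, rfl⟩ := h
  push_cast
  rw [show (2 : ZMod 2) = 0 from by decide, zero_mul, zero_add]

lemma even_of_natCast_z2 {a : ℕ} (h : (a : ZMod 2) = 0) : Even a := by
  by_contra hodd
  rw [natCast_z2_odd (Nat.not_even_iff_odd.mp hodd)] at h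
  exact one_ne_zero h

/-- `(-1)^a` flips sign when the mod-2 cast increments. -/
lemma neg_one_pow_flip {a b : ℕ} (h : (a : ZMod 2) = (b : ZMod 2) + 1) :
    (-1 : ℂ) ^ a = -(-1 : ℂ) ^ b := by
  rcases Nat.even_or_odd a with ha | ha <;> rcases Nat.even_or_odd b with hb | hb
  · rw [natCast_z2_even ha, natCast_z2_even hb] at h; exact absurd h (by decide)
  · simp [ha.neg_one_pow, hb.neg_one_pow]
  · simp [ha.neg_one_pow, hb.neg_one_pow]
  · rw [natCast_z2_odd ha, natCast_z2_odd hb] at h; exact absurd h (by decide)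

/-- Cast of the total phase exponent. -/
lemma Ecast {n : ℕ} (A : Matrix (Fin n) (Fin n) (Fin 2)) (v : Fin 6 → Bits n) :
    ((∑ k : Fin 6, quadB A (v k) : ℕ) : ZMod 2)
      = ∑ i, ∑ j, ((A i j).val : ZMod 2) * (∑ k : Fin 6, zv (v k) i * zv (v k) j) := by
  unfold quadB
  push_cast
  have step1 : ∀ k : Fin 6, (∑ i, ∑ j, ((A i j).val : ZMod 2) * ((v k i).val : ZMod 2)
        * ((v k j).val : ZMod 2))
      = ∑ i, ∑ j, ((A i j).val : ZMod 2) * (zv (v k) i * zv (v k) j) := by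
    intro k
    exact Finset.sum_congr rfl fun i _ => Finset.sum_congr rfl fun j _ => by
      show _ = _ * (((v k i).val : ZMod 2) * ((v k j).val : ZMod 2))
      ring
  rw [Finset.sum_congr rfl fun k _ => step1 k]
  rw [Finset.sum_comm]
  apply Finset.sum_congr rfl
  intro i _
  rw [Finset.sum_comm]
  apply Finset.sum_congr rfl
  intro j _
  rw [Finset.mul_sum]

lemma char_sum_of {n : ℕ} {v : Fin 6 → Bits n} (hC : Cz v) :
    ∑ A ∈ Bn n, (-1 : ℂ) ^ (∑ k : Fin 6, quadB A (v k)) = ((Bn n).card : ℂ) := by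
  have heven : ∀ A : Matrix (Fin n) (Fin n) (Fin 2), Even (∑ k : Fin 6, quadB A (v k)) := by
    intro A
    apply even_of_natCast_z2
    rw [Ecast]
    apply Finset.sum_eq_zero; intro i _
    apply Finset.sum_eq_zero; intro j _
    rw [hC i j, mul_zero]
  rw [Finset.sum_congr rfl fun A _ => (heven A).neg_one_pow]
  rw [Finset.sum_const, nsmul_eq_mul, mul_one]

lemma char_sum_not {n : ℕ} {v : Fin 6 → Bits n} (hC : ¬ Cz v) :
    ∑ A ∈ Bn n, (-1 : ℂ) ^ (∑ k : Fin 6, quadB A (v k)) = 0 := by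
  classical
  -- find an ordered bad pair
  obtain ⟨i0, j0, hle, hc⟩ : ∃ i0 j0 : Fin n, i0 ≤ j0 ∧
      (∑ k : Fin 6, zv (v k) i0 * zv (v k) j0) = 1 := by
    unfold Cz at hC; push_neg at hC
    obtain ⟨i, j, hij⟩ := hC
    rcases le_or_gt i j with h | h
    · exact ⟨i, j, h, (z2_cases _).resolve_left hij⟩
    · refine ⟨j, i, le_of_lt h, ?_⟩
      have : (∑ k : Fin 6, zv (v k) j * zv (v k) i) = ∑ k : Fin 6, zv (v k) i * zv (v k) j :=
        Finset.sum_congr rfl fun k _ => mul_comm _ _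
      rw [this]; exact (z2_cases _).resolve_left hij
  set flip : Matrix (Fin n) (Fin n) (Fin 2) → Matrix (Fin n) (Fin n) (Fin 2) :=
    fun A => Matrix.of fun i j => if i = i0 ∧ j = j0 then A i j + 1 else A i j with hflip
  have hf2 : ∀ a : Fin 2, a + 1 + 1 = a := by decide
  have hfne : ∀ a : Fin 2, a + 1 ≠ a := by decide
  have hfcast : ∀ a : Fin 2, (((a + 1 : Fin 2)).val : ZMod 2) = (a.val : ZMod 2) + 1 := by decide
  -- parity flip of the exponent
  have hpar : ∀ A, ((∑ k : Fin 6, quadB (flip A) (v k) : ℕ) : ZMod 2)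
      = ((∑ k : Fin 6, quadB A (v k) : ℕ) : ZMod 2) + 1 := by
    intro A
    rw [Ecast, Ecast]
    set c : Fin n → Fin n → ZMod 2 := fun i j => ∑ k : Fin 6, zv (v k) i * zv (v k) j with hcz
    have hterm : ∀ i j, ((flip A i j).val : ZMod 2) * c i j
        = ((A i j).val : ZMod 2) * c i j + (if i = i0 ∧ j = j0 then c i j else 0) := by
      intro i j
      rw [hflip]
      by_cases h : i = i0 ∧ j = j0
      · simp only [Matrix.of_apply, if_pos h, hfcast]; ring
      · simp only [Matrix.of_apply, if_neg h]; ring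
    rw [Finset.sum_congr rfl fun i _ => Finset.sum_congr rfl fun j _ => hterm i j]
    rw [Finset.sum_congr rfl fun i (_ : i ∈ univ) => Finset.sum_add_distrib, Finset.sum_add_distrib]
    congr 1
    have inner : ∀ i : Fin n, (∑ j, if i = i0 ∧ j = j0 then c i j else 0)
        = if i = i0 then c i j0 else 0 := by
      intro i
      by_cases h : i = i0
      · subst h; simp
      · simp [h]
    rw [Finset.sum_congr rfl fun i _ => inner i]
    rw [Finset.sum_ite_eq' univ i0 (fun i => c i j0)]
    rw [if_pos (Finset.mem_univ i0)]
    exact hc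
  refine Finset.sum_involution (fun A _ => flip A) ?_ ?_ ?_ ?_
  · intro A _
    rw [neg_one_pow_flip (hpar A)]
    ring
  · intro A _ _ hcon
    have h2 := congrFun (congrFun hcon i0) j0
    simp only [hflip, Matrix.of_apply, eq_self_iff_true, and_self, if_true] at h2
    exact hfne _ h2
  · intro A hA
    simp only [Bn, Finset.mem_filter] at hA ⊢
    refine ⟨Finset.mem_univ _, ?_⟩
    intro i j hij
    rw [hflip]
    simp only [Matrix.of_apply]
    by_cases h : i = i0 ∧ j = j0
    · exact absurd (h.1 ▸ h.2 ▸ hij) (not_lt.mpr hle)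
    · rw [if_neg h]; exact hA.2 i j hij
  · intro A _
    show flip (flip A) = A
    ext i j
    simp only [hflip, Matrix.of_apply]
    by_cases h : i = i0 ∧ j = j0
    · simp only [if_pos h]; exact congrArg Fin.val (hf2 _)
    · simp only [if_neg h]


lemma Cz_of_paired {n : ℕ} {v : Fin 6 → Bits n} (hP : Paired v) : Cz v := by
  obtain ⟨σ, hne, hinv, hv⟩ := hP
  intro i j
  apply Finset.sum_ninvolution (fun k => σ k)
  · intro a
    rw [hv a, z2_add_self]
  · intro a _
    exact hne a
  · intro a
    exact Finset.mem_univ _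
  · intro a
    exact hinv a

lemma paired_iff_Cz {n : ℕ} {v : Fin 6 → Bits n} : Paired v ↔ Cz v := by
  constructor
  · exact Cz_of_paired
  · intro hC
    exact paired_of_even_fibers v (fun k => even_fibers_of_Cz hC k)

lemma Bn_nonempty (n : ℕ) : (Bn n).Nonempty := by
  refine ⟨0, ?_⟩
  simp only [Bn, Finset.mem_filter]
  exact ⟨Finset.mem_univ _, fun i j _ => rfl⟩

lemma lhs_entry {n : ℕ} (A : Matrix (Fin n) (Fin n) (Fin 2)) (x y z w s t : Bits n) :
    kron3 (outer (phiReq A)) (x, y, z) (w, s, t)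
      = (-1 : ℂ) ^ (∑ k : Fin 6, quadB A (![x, y, z, w, s, t] k)) / (8 : ℂ) ^ n := by
  have hvv : ∑ k : Fin 6, quadB A (![x, y, z, w, s, t] k)
      = quadB A x + quadB A y + quadB A z + quadB A w + quadB A s + quadB A t := by
    rw [Fin.sum_univ_six]
    rfl
  rw [hvv]
  unfold kron3 outer phiReq
  simp only [Matrix.of_apply]
  set c : ℂ := (Real.sqrt (2 ^ n) : ℂ) with hcdef
  have hconj : ∀ q : ℕ, (starRingEnd ℂ) ((-1 : ℂ) ^ q / c) = (-1 : ℂ) ^ q / c := by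
    intro q
    rw [map_div₀, map_pow, map_neg, _root_.map_one, hcdef, Complex.conj_ofReal]
  rw [hconj, hconj, hconj]
  have hc : c * c = (2 : ℂ) ^ n := by
    rw [hcdef, ← Complex.ofReal_mul, Real.mul_self_sqrt (by positivity)]
    push_cast
    ring
  have hcne : c ≠ 0 := by
    intro h
    rw [h, mul_zero] at hc
    exact (pow_ne_zero n two_ne_zero) hc.symm
  have h8 : (8 : ℂ) ^ n = (2 : ℂ) ^ n * ((2 : ℂ) ^ n * (2 : ℂ) ^ n) := by
    rw [← mul_pow, ← mul_pow]
    norm_num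
  rw [pow_add, pow_add, pow_add, pow_add, pow_add, h8, ← hc]
  field_simp

/-- third moment of the real equatorial stabilizer ensemble,
expressed via the set `𝒦₁` of paired 6-tuples of bit strings. -/
theorem respovm_third_moment (n : ℕ) (hn : 1 ≤ n) :
    (((Bn n).card : ℂ))⁻¹ • ∑ A ∈ Bn n, kron3 (outer (phiReq A)) =
      ((8 : ℂ) ^ n)⁻¹ •
        ∑ v ∈ Finset.univ.filter (fun v : Fin 6 → Bits n => Paired v),
          Matrix.single (v 0, v 1, v 2) (v 3, v 4, v 5) (1 : ℂ) := by
  classical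
  ext ⟨x, y, z⟩ ⟨w, s, t⟩
  rw [Matrix.smul_apply, Matrix.smul_apply, Matrix.sum_apply, Matrix.sum_apply]
  set vv : Fin 6 → Bits n := ![x, y, z, w, s, t] with hvv
  -- left side
  have hL : ∑ A ∈ Bn n, kron3 (outer (phiReq A)) (x, y, z) (w, s, t)
      = (∑ A ∈ Bn n, (-1 : ℂ) ^ (∑ k : Fin 6, quadB A (vv k))) / (8 : ℂ) ^ n := by
    rw [Finset.sum_div]
    exact Finset.sum_congr rfl fun A _ => lhs_entry A x y z w s t
  -- right side
  have hR : ∑ v ∈ Finset.univ.filter (fun v : Fin 6 → Bits n => Paired v),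
      Matrix.single (v 0, v 1, v 2) (v 3, v 4, v 5) (1 : ℂ) (x, y, z) (w, s, t)
      = if Paired vv then (1 : ℂ) else 0 := by
    have hterm : ∀ v : Fin 6 → Bits n,
        Matrix.single (v 0, v 1, v 2) (v 3, v 4, v 5) (1 : ℂ) (x, y, z) (w, s, t)
        = if v = vv then (1 : ℂ) else 0 := by
      intro v
      unfold Matrix.single
      simp only [Matrix.of_apply]
      congr 1
      rw [Prod.ext_iff, Prod.ext_iff, Prod.ext_iff, Prod.ext_iff]
      simp only [eq_iff_iff]
      constructor
      · rintro ⟨⟨h0, h1, h2⟩, h3, h4, h5⟩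
        funext k
        fin_cases k <;> assumption
      · rintro rfl
        exact ⟨⟨rfl, rfl, rfl⟩, rfl, rfl, rfl⟩
    rw [Finset.sum_congr rfl fun v _ => hterm v]
    rw [Finset.sum_ite_eq' _ vv (fun _ => (1 : ℂ))]
    simp only [Finset.mem_filter, Finset.mem_univ, true_and]
  rw [hL, hR]
  by_cases hP : Paired vv
  · rw [if_pos hP]
    rw [char_sum_of (paired_iff_Cz.mp hP)]
    have hcard : ((Bn n).card : ℂ) ≠ 0 :=
      Nat.cast_ne_zero.mpr (Finset.card_ne_zero.mpr (Bn_nonempty n))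
    field_simp
    rw [smul_eq_mul, smul_eq_mul]
    field_simp
  · rw [if_neg hP]
    rw [char_sum_not (fun hC => hP (paired_iff_Cz.mpr hC))]
    simp
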